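/- arXiv:1803.03674 — 2 statements merged into one kernel-verified Lean document; each statement's English description precedes it below -/
import Mathlib

section
/- Let G ⊆ ℝ be a nonempty closed bounded interval with diameter D = max_{a,b ∈ G} |a − b|, let T ≥ 1, and let C_1, C_{−1} > 0 with C_max = max{C_1, C_{−1}} and C_min = min{C_1, C_{−1}}. For each t = 1,…,T let p_t ∈ G and d_t ∈ {−1, +1}, and define the loss l̃_t(τ) = C_{d_t} · log(exp((p_t − τ)·d_t) + 1). Let τ_1 ∈ G be arbitrary and define for t ≥ 1 the projected online gradient descent update τ_{t+1} = P_G(τ_t − α_t · l̃_t'(τ_t)) with step size α_t = (1 + exp(D))² / (t · C_min · exp(D)), where P_G is the Euclidean projection onto G. Then the regret satisfies Σ_{t=1}^T l̃_t(τ_t) − min_{τ ∈ G} Σ_{t=1}^T l̃_t(τ) ≤ (exp(D) · C_max² / (2 C_min)) · (1 + log T). -/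
open Real Finset Set

lemma clamp_sq_le (a b x y : ℝ) (h1 : a ≤ y) (h2 : y ≤ b) :
    (max a (min b x) - y)^2 ≤ (x - y)^2 := by
  rcases le_total x a with hxa | hxa
  · have : min b x = x := min_eq_right (hxa.trans (h1.trans h2))
    rw [this, max_eq_left hxa]
    nlinarith
  · rcases le_total b x with hbx | hbx
    · rw [min_eq_left hbx, max_eq_right (h1.trans h2)]
      nlinarith
    · rw [min_eq_right hbx, max_eq_right hxa]

lemma harmonic_sum_le (T : ℕ) (hT : 1 ≤ T) :
    ∑ t ∈ Finset.Icc 1 T, (1:ℝ)/t ≤ 1 + Real.log T := by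
  induction T, hT using Nat.le_induction with
  | base => simp
  | succ n hn ih =>
    rw [← Finset.insert_Icc_right_eq_Icc_add_one (by omega), Finset.sum_insert (by simp)]
    have hn0 : (0:ℝ) < n := by exact_mod_cast hn
    have hkey : (1:ℝ)/(n+1) ≤ Real.log (n+1) - Real.log n := by
      have hx : (0:ℝ) < (n:ℝ)/(n+1) := by positivity
      have := Real.log_le_sub_one_of_pos hx
      rw [Real.log_div (by positivity) (by positivity)] at this
      have h2 : (n:ℝ)/(n+1) - 1 = -(1/(n+1)) := by field_simp; ring
      linarith [this, h2 ▸ this]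
    push_cast
    linarith

lemma telescope_Icc (f : ℕ → ℝ) (T : ℕ) (hT : 1 ≤ T) :
    ∑ t ∈ Finset.Icc 1 T, (f t - f (t+1)) = f 1 - f (T+1) := by
  induction T, hT using Nat.le_induction with
  | base => simp
  | succ n hn ih =>
    rw [← Finset.insert_Icc_right_eq_Icc_add_one (by omega), Finset.sum_insert (by simp), ih]
    ring

lemma sigmoid_le (x D : ℝ) (h : x ≤ D) :
    Real.exp x / (Real.exp x + 1) ≤ Real.exp D / (1 + Real.exp D) := by
  rw [div_le_div_iff₀ (by positivity) (by positivity)]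
  have := Real.exp_le_exp.2 h
  nlinarith [Real.exp_pos x, Real.exp_pos D]

lemma sig_deriv_ge (x D : ℝ) (h1 : x ≤ D) (h2 : -D ≤ x) :
    Real.exp D / (1 + Real.exp D)^2 ≤ Real.exp x / (Real.exp x + 1)^2 := by
  rw [div_le_div_iff₀ (by positivity) (by positivity)]
  have hu : Real.exp x ≤ Real.exp D := Real.exp_le_exp.2 h1
  have hv : (1:ℝ) ≤ Real.exp (x + D) := by
    rw [← Real.exp_zero]; exact Real.exp_le_exp.2 (by linarith)
  rw [Real.exp_add] at hv
  nlinarith [Real.exp_pos x, Real.exp_pos D,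
    mul_nonneg (sub_nonneg.2 hu) (sub_nonneg.2 hv)]

/-- the derivative of the logistic thresholding loss -/
noncomputable def ogdG (Cp Cm : ℝ) (p d : ℕ → ℝ) (t : ℕ) (θ : ℝ) : ℝ :=
  (if d t = 1 then Cp else Cm) *
    (-(d t) * (Real.exp ((p t - θ) * d t) / (Real.exp ((p t - θ) * d t) + 1)))

lemma hasDerivAt_llog (c pp dd t : ℝ) :
    HasDerivAt (fun τ => c * Real.log (Real.exp ((pp - τ) * dd) + 1))
      (c * (-dd * (Real.exp ((pp - t) * dd) / (Real.exp ((pp - t) * dd) + 1)))) t := by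
  have h1 : HasDerivAt (fun τ : ℝ => (pp - τ) * dd) (-1 * dd) t :=
    ((hasDerivAt_id t).const_sub pp).mul_const dd
  have h2 := h1.exp
  have h3 := (h2.add_const 1).log (by positivity)
  have h4 := h3.const_mul c
  exact h4.congr_deriv (by ring)

lemma hasDerivAt_llog' (c pp dd t : ℝ) (hd : dd = -1 ∨ dd = 1) :
    HasDerivAt (fun τ => c * (-dd * (Real.exp ((pp - τ) * dd) / (Real.exp ((pp - τ) * dd) + 1))))
      (c * (Real.exp ((pp - t) * dd) / (Real.exp ((pp - t) * dd) + 1)^2)) t := by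
  have h1 : HasDerivAt (fun τ : ℝ => (pp - τ) * dd) (-1 * dd) t :=
    ((hasDerivAt_id t).const_sub pp).mul_const dd
  have h2 := h1.exp
  have h3 := h2.div (h2.add_const 1) (by positivity)
  have h4 := h3.const_mul (c * (-dd))
  have hdd : dd * dd = 1 := by rcases hd with h | h <;> rw [h] <;> norm_num
  convert h4 using 1
  · rfl
  · rfl
  · funext τ; simp only [Pi.div_apply]; ring
  · linear_combination (- c * Real.exp ((pp - t) * dd) / (Real.exp ((pp - t) * dd) + 1)^2) * hdd

lemma strong_convex_ineq (lam a b : ℝ) (L g : ℝ → ℝ)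
    (hL : ∀ t, HasDerivAt L (g t) t)
    (hmono : MonotoneOn (fun t => g t - lam * t) (Set.Icc a b))
    (u v : ℝ) (hu : u ∈ Set.Icc a b) (hv : v ∈ Set.Icc a b) :
    g u * (v - u) + lam/2 * (v - u)^2 ≤ L v - L u := by
  set h : ℝ → ℝ := fun t => L t - lam/2 * t^2 with hh
  have hder : ∀ t, HasDerivAt h (g t - lam * t) t := by
    intro t
    have : HasDerivAt (fun t : ℝ => lam/2 * t^2) (lam/2 * (2*t)) t := by
      simpa using ((hasDerivAt_pow 2 t).const_mul (lam/2))
    have := (hL t).sub this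
    exact this.congr_deriv (by ring)
  rcases lt_trichotomy u v with huv | huv | huv
  · obtain ⟨ξ, hξ, heq⟩ := exists_hasDerivAt_eq_slope h (fun t => g t - lam * t) huv
      (fun t _ => (hder t).continuousAt.continuousWithinAt)
      (fun t _ => hder t)
    have hξmem : ξ ∈ Set.Icc a b := ⟨hu.1.trans hξ.1.le, hξ.2.le.trans hv.2⟩
    have hm : g u - lam * u ≤ g ξ - lam * ξ := hmono hu hξmem hξ.1.le
    have heq2 : (L v - lam/2 * v^2) - (L u - lam/2 * u^2) = (g ξ - lam * ξ) * (v - u) := by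
      have hne : v - u ≠ 0 := by intro h0; linarith [sub_eq_zero.1 h0]
      have : h v - h u = (g ξ - lam * ξ) * (v - u) := by
        rw [eq_div_iff hne] at heq; linarith [heq]
      exact this
    have hfac : 0 ≤ ((g ξ - lam * ξ) - (g u - lam * u)) * (v - u) :=
      mul_nonneg (by linarith) (by linarith)
    nlinarith [hfac, heq2]
  · subst huv; simp
  · obtain ⟨ξ, hξ, heq⟩ := exists_hasDerivAt_eq_slope h (fun t => g t - lam * t) huv
      (fun t _ => (hder t).continuousAt.continuousWithinAt)
      (fun t _ => hder t)
    have hξmem : ξ ∈ Set.Icc a b := ⟨hv.1.trans hξ.1.le, hξ.2.le.trans hu.2⟩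
    have hm : g ξ - lam * ξ ≤ g u - lam * u := hmono hξmem hu hξ.2.le
    have heq2 : (L u - lam/2 * u^2) - (L v - lam/2 * v^2) = (g ξ - lam * ξ) * (u - v) := by
      have hne : u - v ≠ 0 := by intro h0; linarith [sub_eq_zero.1 h0]
      have : h u - h v = (g ξ - lam * ξ) * (u - v) := by
        rw [eq_div_iff hne] at heq; linarith [heq]
      exact this
    have hfac : 0 ≤ ((g u - lam * u) - (g ξ - lam * ξ)) * (u - v) :=
      mul_nonneg (by linarith) (by linarith)
    nlinarith [hfac, heq2]

set_option maxHeartbeats 1000000 in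
/-- Logarithmic regret of projected online gradient descent for the adaptive
threshold over a closed bounded interval `G = [a, b]` with diameter `D`,
against the best fixed threshold in `G`, using logistic thresholding losses
and step sizes `α_t = (1+e^D)²/(t·C_min·e^D)`. -/
theorem ogd_logistic_threshold_regret
    (a b : ℝ) (hab : a ≤ b) (D : ℝ) (hD : D = b - a)
    (T : ℕ) (hT : 1 ≤ T)
    (Cp Cm : ℝ) (hCp : 0 < Cp) (hCm : 0 < Cm)
    (Cmax Cmin : ℝ) (hCmax : Cmax = max Cp Cm) (hCmin : Cmin = min Cp Cm)
    (p : ℕ → ℝ) (hp : ∀ t, p t ∈ Set.Icc a b)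
    (d : ℕ → ℝ) (hd : ∀ t, d t = -1 ∨ d t = 1)
    (l : ℕ → ℝ → ℝ)
    (hl : ∀ t τ, l t τ =
      (if d t = 1 then Cp else Cm) * Real.log (Real.exp ((p t - τ) * d t) + 1))
    (α : ℕ → ℝ)
    (hα : ∀ t, α t = (1 + Real.exp D) ^ 2 / ((t : ℝ) * Cmin * Real.exp D))
    (P : ℝ → ℝ) (hP : ∀ x, P x = max a (min b x))
    (τ : ℕ → ℝ) (hτ₁ : τ 1 ∈ Set.Icc a b)
    (hτrec : ∀ t, 1 ≤ t → τ (t + 1) = P (τ t - α t * deriv (l t) (τ t))) :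
    ∀ τstar ∈ Set.Icc a b,
      ∑ t ∈ Finset.Icc 1 T, l t (τ t) - ∑ t ∈ Finset.Icc 1 T, l t τstar ≤
        Real.exp D * Cmax ^ 2 / (2 * Cmin) * (1 + Real.log T) := by
  intro τstar hstar
  obtain ⟨hsa, hsb⟩ := hstar
  have hCmin0 : 0 < Cmin := by rw [hCmin]; exact lt_min hCp hCm
  have hCmax0 : 0 < Cmax := by rw [hCmax]; exact lt_max_iff.2 (Or.inl hCp)
  have heD : (0:ℝ) < Real.exp D := Real.exp_pos D
  have hDge : 0 ≤ D := by rw [hD]; linarith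
  have hcpos : ∀ t, (0:ℝ) < (if d t = 1 then Cp else Cm) := by
    intro t; split <;> assumption
  have hcmin : ∀ t, Cmin ≤ (if d t = 1 then Cp else Cm) := by
    intro t; rw [hCmin]; split
    · exact min_le_left _ _
    · exact min_le_right _ _
  have hcmaxb : ∀ t, (if d t = 1 then Cp else Cm) ≤ Cmax := by
    intro t; rw [hCmax]; split
    · exact le_max_left _ _
    · exact le_max_right _ _
  -- iterates stay in the interval
  have hτmem : ∀ t, 1 ≤ t → τ t ∈ Set.Icc a b := by
    intro t ht
    induction t, ht using Nat.le_induction with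
    | base => exact hτ₁
    | succ n hn ih =>
      rw [hτrec n hn, hP]
      exact ⟨le_max_left _ _, max_le hab (min_le_left _ _)⟩
  -- range of the exponent
  have hxD : ∀ t θ, θ ∈ Set.Icc a b → (p t - θ) * d t ≤ D ∧ -D ≤ (p t - θ) * d t := by
    intro t θ hθ
    obtain ⟨h1, h2⟩ := hp t
    obtain ⟨h3, h4⟩ := hθ
    rcases hd t with h | h <;> rw [h, hD] <;> constructor <;> nlinarith
  -- derivative of the loss
  have hder : ∀ t θ, HasDerivAt (l t) (ogdG Cp Cm p d t θ) θ := by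
    intro t θ
    rw [show l t = fun θ => (if d t = 1 then Cp else Cm) *
        Real.log (Real.exp ((p t - θ) * d t) + 1) from funext (hl t)]
    exact hasDerivAt_llog _ _ _ θ
  set lam : ℝ := Cmin * Real.exp D / (1 + Real.exp D)^2 with hlam_def
  set Gb : ℝ := Cmax * Real.exp D / (1 + Real.exp D) with hGb_def
  have hlam_pos : 0 < lam := by rw [hlam_def]; positivity
  have hαt : ∀ t : ℕ, 1 ≤ t → α t = 1/(lam * t) := by
    intro t ht
    have ht0 : (0:ℝ) < t := by exact_mod_cast ht
    rw [hα t, hlam_def]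
    have h1 : Cmin ≠ 0 := ne_of_gt hCmin0
    have h2 : Real.exp D ≠ 0 := ne_of_gt heD
    have h3 : (t:ℝ) ≠ 0 := ne_of_gt ht0
    have h4 : (1 + Real.exp D) ≠ 0 := by positivity
    field_simp
  -- monotonicity of shifted derivative
  have hmono : ∀ t, MonotoneOn (fun θ => ogdG Cp Cm p d t θ - lam * θ) (Set.Icc a b) := by
    intro t
    have hder2 : ∀ θ, HasDerivAt (fun θ => ogdG Cp Cm p d t θ - lam * θ)
        ((if d t = 1 then Cp else Cm) *
          (Real.exp ((p t - θ) * d t) / (Real.exp ((p t - θ) * d t) + 1)^2) - lam) θ := by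
      intro θ
      have h2 : HasDerivAt (fun θ : ℝ => lam * θ) lam θ := by
        simpa using (hasDerivAt_id θ).const_mul lam
      exact (hasDerivAt_llog' _ _ _ _ (hd t)).sub h2
    have hdiff : Differentiable ℝ (fun θ => ogdG Cp Cm p d t θ - lam * θ) :=
      fun θ => (hder2 θ).differentiableAt
    apply monotoneOn_of_deriv_nonneg (convex_Icc a b) hdiff.continuous.continuousOn
      hdiff.differentiableOn
    intro θ hθ
    rw [interior_Icc] at hθ
    rw [(hder2 θ).deriv]
    have hθ' : θ ∈ Set.Icc a b := ⟨hθ.1.le, hθ.2.le⟩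
    obtain ⟨hx1, hx2⟩ := hxD t θ hθ'
    have hsig := sig_deriv_ge _ _ hx1 hx2
    have hmm : Cmin * (Real.exp D / (1 + Real.exp D)^2) ≤
        (if d t = 1 then Cp else Cm) *
          (Real.exp ((p t - θ) * d t) / (Real.exp ((p t - θ) * d t) + 1)^2) :=
      mul_le_mul (hcmin t) hsig (by positivity) (le_of_lt (hcpos t))
    rw [hlam_def, mul_div_assoc]
    linarith
  -- strong convexity instantaneous inequality
  have hsc : ∀ t (u : ℝ), u ∈ Set.Icc a b → ∀ v ∈ Set.Icc a b,
      ogdG Cp Cm p d t u * (v - u) + lam/2 * (v - u)^2 ≤ l t v - l t u :=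
    fun t u hu v hv =>
      strong_convex_ineq lam a b (l t) (ogdG Cp Cm p d t) (hder t) (hmono t) u v hu hv
  -- gradient bound
  have hgb : ∀ t θ, θ ∈ Set.Icc a b → (ogdG Cp Cm p d t θ)^2 ≤ Gb^2 := by
    intro t θ hθ
    obtain ⟨hx1, _⟩ := hxD t θ hθ
    have hsig := sigmoid_le _ _ hx1
    have hs0 : (0:ℝ) ≤ Real.exp ((p t - θ) * d t) / (Real.exp ((p t - θ) * d t) + 1) := by
      positivity
    have hmul : (if d t = 1 then Cp else Cm) *
        (Real.exp ((p t - θ) * d t) / (Real.exp ((p t - θ) * d t) + 1)) ≤ Gb := by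
      rw [hGb_def, mul_div_assoc]
      exact mul_le_mul (hcmaxb t) hsig hs0 (le_of_lt hCmax0)
    have hsq : ((if d t = 1 then Cp else Cm) *
        (Real.exp ((p t - θ) * d t) / (Real.exp ((p t - θ) * d t) + 1)))^2 ≤ Gb^2 :=
      pow_le_pow_left₀ (by positivity) hmul 2
    have hd2 : d t * d t = 1 := by rcases hd t with h | h <;> rw [h] <;> norm_num
    calc (ogdG Cp Cm p d t θ)^2
        = ((if d t = 1 then Cp else Cm) *
            (Real.exp ((p t - θ) * d t) / (Real.exp ((p t - θ) * d t) + 1)))^2 * (d t * d t) := by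
          simp only [ogdG]; ring
      _ = ((if d t = 1 then Cp else Cm) *
            (Real.exp ((p t - θ) * d t) / (Real.exp ((p t - θ) * d t) + 1)))^2 := by
          rw [hd2, mul_one]
      _ ≤ Gb^2 := hsq
  -- the telescoping potential
  set F : ℕ → ℝ := fun s => ((s:ℝ) - 1) * (τ s - τstar)^2 with hF_def
  -- per-step regret bound
  have hstep : ∀ t, 1 ≤ t →
      l t (τ t) - l t τstar ≤ lam/2 * (F t - F (t+1)) + Gb^2/(2*lam) * (1/(t:ℝ)) := by
    intro t ht
    have ht0 : (0:ℝ) < (t:ℝ) := by exact_mod_cast ht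
    have hτt := hτmem t ht
    have hd1 : deriv (l t) (τ t) = ogdG Cp Cm p d t (τ t) := (hder t (τ t)).deriv
    have hup : τ (t+1) = max a (min b (τ t - α t * ogdG Cp Cm p d t (τ t))) := by
      rw [hτrec t ht, hd1, hP]
    have hproj : (τ (t+1) - τstar)^2 ≤ (τ t - α t * ogdG Cp Cm p d t (τ t) - τstar)^2 := by
      rw [hup]; exact clamp_sq_le a b _ τstar hsa hsb
    have hαv : α t = 1/(lam * t) := hαt t ht
    have hlt0 : (0:ℝ) < lam * t := mul_pos hlam_pos ht0
    have h1 : 2 * (1/(lam * (t:ℝ))) * (ogdG Cp Cm p d t (τ t) * (τ t - τstar)) ≤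
        (τ t - τstar)^2 - (τ (t+1) - τstar)^2
          + (1/(lam * (t:ℝ)))^2 * (ogdG Cp Cm p d t (τ t))^2 := by
      rw [hαv] at hproj
      nlinarith [hproj]
    have h2 := mul_le_mul_of_nonneg_left h1 (le_of_lt (half_pos hlt0))
    have h3 : lam * (t:ℝ) / 2 * (2 * (1/(lam * (t:ℝ))) * (ogdG Cp Cm p d t (τ t) * (τ t - τstar)))
        = ogdG Cp Cm p d t (τ t) * (τ t - τstar) := by
      field_simp
    rw [h3] at h2
    have h5 : lam * (t:ℝ) / 2 * ((τ t - τstar)^2 - (τ (t+1) - τstar)^2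
          + (1/(lam * (t:ℝ)))^2 * (ogdG Cp Cm p d t (τ t))^2)
        ≤ lam * (t:ℝ) / 2 * ((τ t - τstar)^2 - (τ (t+1) - τstar)^2)
          + Gb^2/(2*lam) * (1/(t:ℝ)) := by
      have hg2 := hgb t (τ t) hτt
      have e1 : lam * (t:ℝ) / 2 * ((τ t - τstar)^2 - (τ (t+1) - τstar)^2
            + (1/(lam * (t:ℝ)))^2 * (ogdG Cp Cm p d t (τ t))^2)
          = lam * (t:ℝ) / 2 * ((τ t - τstar)^2 - (τ (t+1) - τstar)^2)
            + (ogdG Cp Cm p d t (τ t))^2 * (1/(2*(lam * (t:ℝ)))) := by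
        field_simp
      have e2 : Gb^2/(2*lam) * (1/(t:ℝ)) = Gb^2 * (1/(2*(lam * (t:ℝ)))) := by
        field_simp
      rw [e1, e2]
      have := mul_le_mul_of_nonneg_right hg2 (le_of_lt (by positivity :
        (0:ℝ) < 1/(2*(lam * (t:ℝ)))))
      linarith
    have hkey : ogdG Cp Cm p d t (τ t) * (τ t - τstar) ≤
        lam * (t:ℝ) / 2 * ((τ t - τstar)^2 - (τ (t+1) - τstar)^2) + Gb^2/(2*lam) * (1/(t:ℝ)) :=
      le_trans h2 h5
    -- strong convexity
    have hsc1 := hsc t (τ t) hτt τstar ⟨hsa, hsb⟩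
    have haux : ogdG Cp Cm p d t (τ t) * (τstar - τ t) =
        -(ogdG Cp Cm p d t (τ t) * (τ t - τstar)) := by ring
    have hsq : (τstar - τ t)^2 = (τ t - τstar)^2 := by ring
    rw [haux, hsq] at hsc1
    have goal_eq : lam/2 * (F t - F (t+1)) + Gb^2/(2*lam) * (1/(t:ℝ))
        = lam * (t:ℝ) / 2 * ((τ t - τstar)^2 - (τ (t+1) - τstar)^2)
          - lam/2 * (τ t - τstar)^2 + Gb^2/(2*lam) * (1/(t:ℝ)) := by
      simp only [hF_def]
      push_cast
      ring
    rw [goal_eq]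
    linarith [hkey, hsc1]
  -- summation
  have hsum : ∑ t ∈ Finset.Icc 1 T, (l t (τ t) - l t τstar) ≤
      ∑ t ∈ Finset.Icc 1 T, (lam/2 * (F t - F (t+1)) + Gb^2/(2*lam) * (1/(t:ℝ))) :=
    Finset.sum_le_sum fun t htmem => hstep t (Finset.mem_Icc.1 htmem).1
  have htel := telescope_Icc F T hT
  have hsplit : ∑ t ∈ Finset.Icc 1 T, (lam/2 * (F t - F (t+1)) + Gb^2/(2*lam) * (1/(t:ℝ)))
      = lam/2 * (F 1 - F (T+1)) + Gb^2/(2*lam) * ∑ t ∈ Finset.Icc 1 T, (1/(t:ℝ)) := by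
    rw [Finset.sum_add_distrib, ← Finset.mul_sum, ← Finset.mul_sum, htel]
  have hF1 : F 1 = 0 := by simp [hF_def]
  have hFT : 0 ≤ F (T+1) := by
    simp only [hF_def]
    push_cast
    have h0 : (0:ℝ) ≤ (T:ℝ) := Nat.cast_nonneg T
    nlinarith [sq_nonneg (τ (T+1) - τstar)]
  have hharm := harmonic_sum_le T hT
  have hKpos : (0:ℝ) ≤ Gb^2/(2*lam) := by positivity
  have hKeq : Gb^2/(2*lam) = Real.exp D * Cmax^2/(2*Cmin) := by
    rw [hGb_def, hlam_def]
    have h1 : Cmin ≠ 0 := ne_of_gt hCmin0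
    have h2 : Real.exp D ≠ 0 := ne_of_gt heD
    have h4 : (1 + Real.exp D) ≠ 0 := by positivity
    field_simp
  have hfinal : ∑ t ∈ Finset.Icc 1 T, l t (τ t) - ∑ t ∈ Finset.Icc 1 T, l t τstar
      = ∑ t ∈ Finset.Icc 1 T, (l t (τ t) - l t τstar) := (Finset.sum_sub_distrib _ _).symm
  rw [hfinal, ← hKeq]
  have hterm1 : lam/2 * (F 1 - F (T+1)) ≤ 0 := by
    rw [hF1]
    nlinarith [hFT, hlam_pos.le]
  have hterm2 : Gb^2/(2*lam) * ∑ t ∈ Finset.Icc 1 T, (1/(t:ℝ))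
      ≤ Gb^2/(2*lam) * (1 + Real.log T) := mul_le_mul_of_nonneg_left hharm hKpos
  calc ∑ t ∈ Finset.Icc 1 T, (l t (τ t) - l t τstar)
      ≤ lam/2 * (F 1 - F (T+1)) + Gb^2/(2*lam) * ∑ t ∈ Finset.Icc 1 T, (1/(t:ℝ)) := by
        rw [← hsplit]; exact hsum
    _ ≤ Gb^2/(2*lam) * (1 + Real.log T) := by linarith
end

section
/- Let G ⊆ ℝ be a nonempty closed bounded interval, let H > 0 and L ≥ 0, let T ≥ 1, and for each t = 1,…,T let ℓ_t : ℝ → ℝ be twice differentiable with ℓ_t''(x) ≥ H for all x ∈ G and |ℓ_t'(x)| ≤ L for all x ∈ G. Let τ_1 ∈ G and define τ_{t+1} = P_G(τ_t − (1/(H t)) · ℓ_t'(τ_t)) for t ≥ 1, where P_G is the Euclidean projection onto G. Then the regret satisfies Σ_{t=1}^T ℓ_t(τ_t) − min_{τ ∈ G} Σ_{t=1}^T ℓ_t(τ) ≤ (L² / (2H)) · (1 + log T). -/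
/-- Clamping onto `[a,b]` is nonexpansive towards points of `[a,b]`. -/
lemma ogd_proj_sq_le (a b u v : ℝ) (hab : a ≤ b) (hv1 : a ≤ v) (hv2 : v ≤ b) :
    (max a (min b u) - v) ^ 2 ≤ (u - v) ^ 2 := by
  rcases le_total u a with h | h
  · have h1 : min b u = u := min_eq_right (h.trans hab)
    have h2 : max a u = a := max_eq_left h
    rw [h1, h2]
    nlinarith
  · rcases le_total b u with h' | h'
    · have h1 : min b u = b := min_eq_left h'
      rw [h1, max_eq_right hab]
      nlinarith
    · rw [min_eq_right h', max_eq_right h]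

lemma ogd_proj_mem (a b u : ℝ) (hab : a ≤ b) : max a (min b u) ∈ Set.Icc a b :=
  ⟨le_max_left a _, max_le hab (min_le_left b u)⟩

/-- Strong convexity lower bound from second derivative bound on an interval. -/
lemma ogd_strong_lb (f : ℝ → ℝ) (hd : Differentiable ℝ f)
    (hd2 : Differentiable ℝ (deriv f)) {H a b : ℝ}
    (hs : ∀ z ∈ Set.Icc a b, H ≤ deriv (deriv f) z)
    {x y : ℝ} (hx : x ∈ Set.Icc a b) (hy : y ∈ Set.Icc a b) :
    f x + deriv f x * (y - x) + H / 2 * (y - x) ^ 2 ≤ f y := by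
  set ψ : ℝ → ℝ := fun z => deriv f z - deriv f x - H * (z - x) with hψdef
  have hψd : ∀ z, HasDerivAt ψ (deriv (deriv f) z - H) z := by
    intro z
    have h1 : HasDerivAt (deriv f) (deriv (deriv f) z) z := (hd2 z).hasDerivAt
    have h2 : HasDerivAt (fun z => deriv f x + H * (z - x)) (H) z := by
      simpa using (((hasDerivAt_id z).sub_const x).const_mul H).const_add (deriv f x)
    have h3 := h1.sub h2
    have heq : ψ = fun z => deriv f z - (deriv f x + H * (z - x)) := by
      funext z; simp only [hψdef]; ring
    rw [heq]
    exact h3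
  have hψdiff : Differentiable ℝ ψ := fun z => (hψd z).differentiableAt
  have hψderiv : deriv ψ = fun z => deriv (deriv f) z - H := funext fun z => (hψd z).deriv
  -- ψ is monotone on [a,b]
  have hψmono : MonotoneOn ψ (Set.Icc a b) := by
    apply monotoneOn_of_deriv_nonneg (convex_Icc a b) hψdiff.continuous.continuousOn
      hψdiff.differentiableOn
    intro z hz
    rw [hψderiv]
    have : z ∈ Set.Icc a b := interior_subset hz
    have := hs z this
    simp; linarith
  have hψx : ψ x = 0 := by simp [hψdef]
  set φ : ℝ → ℝ := fun z => f z - deriv f x * z - H / 2 * (z - x) ^ 2 with hφdef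
  have hφd : ∀ z, HasDerivAt φ (ψ z) z := by
    intro z
    have h1 : HasDerivAt f (deriv f z) z := (hd z).hasDerivAt
    have h2 : HasDerivAt (fun z => deriv f x * z) (deriv f x) z := by
      simpa using (hasDerivAt_id z).const_mul (deriv f x)
    have h3 : HasDerivAt (fun z => H / 2 * (z - x) ^ 2) (H * (z - x)) z := by
      have := (((hasDerivAt_id z).sub_const x).pow 2).const_mul (H / 2)
      refine this.congr_deriv ?_
      simp only [id_eq]
      push_cast
      ring
    exact (h1.sub h2).sub h3
  have hφdiff : Differentiable ℝ φ := fun z => (hφd z).differentiableAt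
  have hφderiv : deriv φ = ψ := funext fun z => (hφd z).deriv
  have key : φ x ≤ φ y := by
    rcases le_total x y with hxy | hxy
    · have hmono : MonotoneOn φ (Set.Icc x y) := by
        apply monotoneOn_of_deriv_nonneg (convex_Icc x y)
          hφdiff.continuous.continuousOn hφdiff.differentiableOn
        intro z hz
        rw [hφderiv]
        have hz' : z ∈ Set.Icc x y := interior_subset hz
        have hzab : z ∈ Set.Icc a b := ⟨hx.1.trans hz'.1, hz'.2.trans hy.2⟩
        have := hψmono hx hzab hz'.1
        linarith [hψx ▸ this]
      exact hmono (Set.left_mem_Icc.2 hxy) (Set.right_mem_Icc.2 hxy) hxy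
    · have hanti : AntitoneOn φ (Set.Icc y x) := by
        apply antitoneOn_of_deriv_nonpos (convex_Icc y x)
          hφdiff.continuous.continuousOn hφdiff.differentiableOn
        intro z hz
        rw [hφderiv]
        have hz' : z ∈ Set.Icc y x := interior_subset hz
        have hzab : z ∈ Set.Icc a b := ⟨hy.1.trans hz'.1, hz'.2.trans hx.2⟩
        have := hψmono hzab hx hz'.2
        linarith [hψx ▸ this]
      exact hanti (Set.left_mem_Icc.2 hxy) (Set.right_mem_Icc.2 hxy) hxy
  simp only [hφdef] at key
  nlinarith [key]

lemma ogd_telescope (f : ℕ → ℝ) (T : ℕ) :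
    ∑ t ∈ Finset.Icc 1 T, (f t - f (t + 1)) = f 1 - f (T + 1) := by
  induction T with
  | zero => simp
  | succ n ih =>
    rw [Finset.sum_Icc_succ_top (by omega), ih]
    ring

lemma ogd_harmonic (T : ℕ) (hT : 1 ≤ T) :
    ∑ t ∈ Finset.Icc 1 T, (1 : ℝ) / t ≤ 1 + Real.log T := by
  induction T with
  | zero => omega
  | succ n ih =>
    rcases Nat.eq_or_lt_of_le hT with h | h
    · simp [← h]
    · have hn : 1 ≤ n := by omega
      have hn0 : (0:ℝ) < n := by exact_mod_cast hn
      have hstep : (1 : ℝ) / (n + 1) ≤ Real.log (n + 1) - Real.log n := by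
        have hpos : (0:ℝ) < (n : ℝ) / (n + 1) := by positivity
        have := Real.log_le_sub_one_of_pos hpos
        rw [Real.log_div (ne_of_gt hn0) (by positivity)] at this
        have hne : (0:ℝ) < (n:ℝ) + 1 := by positivity
        rw [div_sub_one (ne_of_gt hne)] at this
        have : Real.log n - Real.log (n+1) ≤ -(1/((n:ℝ)+1)) := by
          calc Real.log n - Real.log (n+1) ≤ ((n:ℝ) - ((n:ℝ)+1))/((n:ℝ)+1) := this
          _ = -(1/((n:ℝ)+1)) := by ring
        linarith
      rw [Finset.sum_Icc_succ_top (by omega)]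
      have := ih hn
      push_cast
      push_cast at hstep
      linarith

/-- Logarithmic regret of projected online gradient descent on a closed
bounded interval `G = [a, b]` with step sizes `1/(H t)`, for twice
differentiable losses that are `H`-strongly convex and `L`-Lipschitz on `G`. -/
theorem ogd_strongly_convex_regret
    (a b : ℝ) (hab : a ≤ b)
    (H L : ℝ) (hH : 0 < H) (hL : 0 ≤ L)
    (T : ℕ) (hT : 1 ≤ T)
    (l : ℕ → ℝ → ℝ)
    (hdiff : ∀ t, Differentiable ℝ (l t))
    (hdiff2 : ∀ t, Differentiable ℝ (deriv (l t)))
    (hstrong : ∀ t, ∀ x ∈ Set.Icc a b, H ≤ deriv (deriv (l t)) x)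
    (hlip : ∀ t, ∀ x ∈ Set.Icc a b, |deriv (l t) x| ≤ L)
    (P : ℝ → ℝ) (hP : ∀ x, P x = max a (min b x))
    (τ : ℕ → ℝ) (hτ₁ : τ 1 ∈ Set.Icc a b)
    (hτrec : ∀ t, 1 ≤ t →
      τ (t + 1) = P (τ t - 1 / (H * (t : ℝ)) * deriv (l t) (τ t))) :
    ∀ τstar ∈ Set.Icc a b,
      ∑ t ∈ Finset.Icc 1 T, l t (τ t) - ∑ t ∈ Finset.Icc 1 T, l t τstar ≤
        L ^ 2 / (2 * H) * (1 + Real.log T) := by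
  intro τstar hstar
  have hmem : ∀ t, 1 ≤ t → τ t ∈ Set.Icc a b := by
    intro t ht
    induction t, ht using Nat.le_induction with
    | base => exact hτ₁
    | succ n hn ih =>
      rw [hτrec n hn, hP]
      exact ogd_proj_mem a b _ hab
  set Φ : ℕ → ℝ := fun t => H * ((t : ℝ) - 1) / 2 * (τ t - τstar) ^ 2 with hΦ
  have key : ∀ t, 1 ≤ t →
      l t (τ t) - l t τstar ≤ Φ t - Φ (t + 1) + L ^ 2 / (2 * H) * (1 / (t : ℝ)) := by
    intro t ht
    have htpos : (0 : ℝ) < t := by exact_mod_cast ht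
    have hc : (0 : ℝ) < H * t := mul_pos hH htpos
    have hτt := hmem t ht
    set g := deriv (l t) (τ t) with hg
    set X := τ t - τstar with hX
    set Y := τ (t + 1) - τstar with hY
    have hA := ogd_strong_lb (l t) (hdiff t) (hdiff2 t) (hstrong t) hτt hstar
    have hB : Y ^ 2 ≤ (τ t - 1 / (H * t) * g - τstar) ^ 2 := by
      rw [hY, hτrec t ht, hP]
      exact ogd_proj_sq_le a b _ τstar hab hstar.1 hstar.2
    have hgL : g ^ 2 ≤ L ^ 2 := by
      have h1 := hlip t (τ t) hτt
      nlinarith [abs_nonneg g, sq_abs g]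
    have hexp : H * t / 2 * (τ t - 1 / (H * t) * g - τstar) ^ 2
        = H * t / 2 * X ^ 2 - g * X + g ^ 2 / (2 * (H * t)) := by
      field_simp
      ring
    have h1 : H * t / 2 * Y ^ 2 ≤ H * t / 2 * X ^ 2 - g * X + g ^ 2 / (2 * (H * t)) := by
      rw [← hexp]
      exact mul_le_mul_of_nonneg_left hB (by positivity)
    have h2 : g ^ 2 / (2 * (H * t)) ≤ L ^ 2 / (2 * (H * t)) := by gcongr
    have h3 : L ^ 2 / (2 * (H * t)) = L ^ 2 / (2 * H) * (1 / (t : ℝ)) := by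
      field_simp
    have hA' : l t (τ t) - l t τstar ≤ g * X - H / 2 * X ^ 2 := by nlinarith [hA]
    have hΦt : Φ t = H * t / 2 * X ^ 2 - H / 2 * X ^ 2 := by
      simp only [hΦ, ← hX]; ring
    have hΦt1 : Φ (t + 1) = H * t / 2 * Y ^ 2 := by
      simp only [hΦ, ← hY]
      push_cast
      ring
    rw [hΦt, hΦt1, ← h3]
    linarith
  have hsplit : ∑ t ∈ Finset.Icc 1 T, l t (τ t) - ∑ t ∈ Finset.Icc 1 T, l t τstar
      = ∑ t ∈ Finset.Icc 1 T, (l t (τ t) - l t τstar) := by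
    rw [Finset.sum_sub_distrib]
  rw [hsplit]
  have hsum : ∑ t ∈ Finset.Icc 1 T, (l t (τ t) - l t τstar)
      ≤ ∑ t ∈ Finset.Icc 1 T, (Φ t - Φ (t + 1) + L ^ 2 / (2 * H) * (1 / (t : ℝ))) := by
    apply Finset.sum_le_sum
    intro t ht'
    exact key t (Finset.mem_Icc.mp ht').1
  have hsum2 : ∑ t ∈ Finset.Icc 1 T, (Φ t - Φ (t + 1) + L ^ 2 / (2 * H) * (1 / (t : ℝ)))
      = (Φ 1 - Φ (T + 1)) + L ^ 2 / (2 * H) * ∑ t ∈ Finset.Icc 1 T, (1 / (t : ℝ)) := by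
    rw [Finset.sum_add_distrib, ogd_telescope, Finset.mul_sum]
  have hΦ1 : Φ 1 = 0 := by simp [hΦ]
  have hΦT : 0 ≤ Φ (T + 1) := by
    have : (0:ℝ) ≤ ((T:ℝ) + 1) - 1 := by
      have : (0:ℝ) ≤ (T:ℝ) := Nat.cast_nonneg T
      linarith
    simp only [hΦ]
    push_cast
    positivity
  have hharm : ∑ t ∈ Finset.Icc 1 T, (1 : ℝ) / t ≤ 1 + Real.log T := ogd_harmonic T hT
  have hcoef : (0:ℝ) ≤ L ^ 2 / (2 * H) := by positivity
  calc ∑ t ∈ Finset.Icc 1 T, (l t (τ t) - l t τstar)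
      ≤ (Φ 1 - Φ (T + 1)) + L ^ 2 / (2 * H) * ∑ t ∈ Finset.Icc 1 T, (1 / (t : ℝ)) := by
        rw [← hsum2]; exact hsum
    _ ≤ 0 + L ^ 2 / (2 * H) * (1 + Real.log T) := by
        have := mul_le_mul_of_nonneg_left hharm hcoef
        linarith
    _ = L ^ 2 / (2 * H) * (1 + Real.log T) := by ring
end
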